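/- Let Z = ∂/∂z + i z̄ ∂/∂u. For (z,u) ≠ (0,0), the function h(z,u) = 1/(|z|² + iu) satisfies Z h = 0, and consequently Z(Z(Z̄(log(|z|⁴ + u²)))) = 0, where Z̄ = ∂/∂z̄ − i z ∂/∂u. -/

import Mathlib

open Complex

/-- The CR vector field Z = ∂/∂z + i z̄ ∂/∂u on the Heisenberg group ℂ × ℝ,
where ∂/∂z = ½(∂/∂x − i ∂/∂y) is the Wirtinger derivative. -/
noncomputable def Zop (f : ℂ × ℝ → ℂ) : ℂ × ℝ → ℂ := fun p =>
  (1 / 2 : ℂ) * (fderiv ℝ f p (1, 0) - Complex.I * fderiv ℝ f p (Complex.I, 0))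
    + Complex.I * (starRingEnd ℂ p.1) * fderiv ℝ f p (0, 1)

/-- The CR vector field Z̄ = ∂/∂z̄ − i z ∂/∂u on the Heisenberg group ℂ × ℝ,
where ∂/∂z̄ = ½(∂/∂x + i ∂/∂y). -/
noncomputable def Zbar (f : ℂ × ℝ → ℂ) : ℂ × ℝ → ℂ := fun p =>
  (1 / 2 : ℂ) * (fderiv ℝ f p (1, 0) + Complex.I * fderiv ℝ f p (Complex.I, 0))
    - Complex.I * p.1 * fderiv ℝ f p (0, 1)

/-- The vector field T = ∂/∂u. -/
noncomputable def Tder (f : ℂ × ℝ → ℂ) : ℂ × ℝ → ℂ := fun p => fderiv ℝ f p (0, 1)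

/-- The sublaplacian Δ_b = Z Z̄ + Z̄ Z. -/
noncomputable def Lapb (f : ℂ × ℝ → ℂ) : ℂ × ℝ → ℂ := fun p =>
  Zop (Zbar f) p + Zbar (Zop f) p

noncomputable def Gf : ℂ × ℝ → ℂ := fun q => q.1 * (starRingEnd ℂ) q.1 + Complex.I * q.2

lemma Gf_ne (q : ℂ × ℝ) (hq : q ≠ 0) : Gf q ≠ 0 := by
  intro h
  apply hq
  have hre := congrArg Complex.re h
  have him := congrArg Complex.im h
  simp [Gf, Complex.mul_conj] at hre him
  exact Prod.ext (by simpa using Complex.normSq_eq_zero.mp (by simpa using hre))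
    (by simpa using him)

noncomputable def Lg (q : ℂ × ℝ) : ℂ × ℝ →L[ℝ] ℂ :=
  q.1 • ((Complex.conjCLE.toContinuousLinearMap).comp (ContinuousLinearMap.fst ℝ ℂ ℝ))
    + (starRingEnd ℂ q.1) • (ContinuousLinearMap.fst ℝ ℂ ℝ)
    + Complex.I • (Complex.ofRealCLM.comp (ContinuousLinearMap.snd ℝ ℂ ℝ))

lemma hasFDerivAt_Gf (q : ℂ × ℝ) : HasFDerivAt Gf (Lg q) q := by
  have h1 : HasFDerivAt (fun q : ℂ × ℝ => q.1) (ContinuousLinearMap.fst ℝ ℂ ℝ) q :=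
    (ContinuousLinearMap.fst ℝ ℂ ℝ).hasFDerivAt
  have h2 : HasFDerivAt (fun q : ℂ × ℝ => (starRingEnd ℂ) q.1)
      ((Complex.conjCLE.toContinuousLinearMap).comp (ContinuousLinearMap.fst ℝ ℂ ℝ)) q :=
    (Complex.conjCLE.toContinuousLinearMap.hasFDerivAt).comp q h1
  have h3 : HasFDerivAt (fun q : ℂ × ℝ => ((q.2 : ℝ) : ℂ))
      (Complex.ofRealCLM.comp (ContinuousLinearMap.snd ℝ ℂ ℝ)) q :=
    (Complex.ofRealCLM.hasFDerivAt).comp q (ContinuousLinearMap.snd ℝ ℂ ℝ).hasFDerivAt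
  have := (h1.mul h2).add (h3.const_mul Complex.I)
  refine this.congr_fderiv ?_
  all_goals (refine ContinuousLinearMap.ext fun v => ?_; simp [Lg]; try ring)

lemma Lg_apply (q : ℂ × ℝ) (v : ℂ) (t : ℝ) :
    Lg q (v, t) = q.1 * (starRingEnd ℂ) v + (starRingEnd ℂ) q.1 * v + Complex.I * t := by
  simp [Lg]; try ring

lemma hasFDerivAt_invGf (q : ℂ × ℝ) (hq : q ≠ 0) :
    HasFDerivAt (fun q => (Gf q)⁻¹)
      ((-((Gf q)⁻¹ * (Gf q)⁻¹)) • Lg q) q := by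
  have h := (hasFDerivAt_inv' (𝕜 := ℝ) (Gf_ne q hq)).comp q (hasFDerivAt_Gf q)
  refine h.congr_fderiv ?_
  refine ContinuousLinearMap.ext fun v => ?_
  simp [ContinuousLinearMap.mulLeftRight]
  ring

lemma Zop_invGf (q : ℂ × ℝ) (hq : q ≠ 0) : Zop (fun q => (Gf q)⁻¹) q = 0 := by
  show (1 / 2 : ℂ) * _ + _ = 0
  rw [(hasFDerivAt_invGf q hq).fderiv]
  simp only [ContinuousLinearMap.coe_smul', Pi.smul_apply, Lg_apply, smul_eq_mul]
  simp only [map_one, mul_one, Complex.ofReal_zero, mul_zero, add_zero, map_ofNat,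
    Complex.conj_I, Complex.ofReal_one]
  ring_nf
  simp [Complex.I_sq]


noncomputable def Phi : ℂ × ℝ → ℂ := fun q =>
  ((Real.log (‖q.1‖ ^ 4 + q.2 ^ 2) : ℝ) : ℂ)

noncomputable def rho : ℂ × ℝ → ℝ := fun q =>
  (q.1.re * q.1.re + q.1.im * q.1.im) * (q.1.re * q.1.re + q.1.im * q.1.im) + q.2 * q.2

lemma Phi_eq : Phi = fun q => ((Real.log (rho q) : ℝ) : ℂ) := by
  funext q
  have : ‖q.1‖ ^ 4 + q.2 ^ 2 = rho q := by
    rw [rho, show (4:ℕ) = 2*2 from rfl, pow_mul, Complex.sq_norm, Complex.normSq_apply]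
    ring
  rw [Phi, this]

lemma rho_pos (q : ℂ × ℝ) (hq : q ≠ 0) : 0 < rho q := by
  have hns : Complex.normSq q.1 = q.1.re * q.1.re + q.1.im * q.1.im := Complex.normSq_apply q.1
  rcases eq_or_ne q.1 0 with h1 | h1
  · have h2 : q.2 ≠ 0 := fun h2 => hq (Prod.ext h1 h2)
    have h3 : 0 < q.2 * q.2 := mul_self_pos.mpr h2
    simp only [rho]
    nlinarith [mul_self_nonneg (q.1.re * q.1.re + q.1.im * q.1.im)]
  · have h := Complex.normSq_pos.mpr h1
    rw [hns] at h
    simp only [rho]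
    nlinarith [mul_self_nonneg q.2]

noncomputable def Xc : ℂ × ℝ →L[ℝ] ℝ := (Complex.reCLM).comp (ContinuousLinearMap.fst ℝ ℂ ℝ)
noncomputable def Yc : ℂ × ℝ →L[ℝ] ℝ := (Complex.imCLM).comp (ContinuousLinearMap.fst ℝ ℂ ℝ)
noncomputable def Uc : ℂ × ℝ →L[ℝ] ℝ := ContinuousLinearMap.snd ℝ ℂ ℝ

lemma ZbarPhi (q : ℂ × ℝ) (hq : q ≠ 0) : Zbar Phi q = 2 * q.1 * (Gf q)⁻¹ := by
  have hX : HasFDerivAt (fun q : ℂ × ℝ => q.1.re) Xc q :=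
    (Complex.reCLM.hasFDerivAt).comp q (ContinuousLinearMap.fst ℝ ℂ ℝ).hasFDerivAt
  have hY : HasFDerivAt (fun q : ℂ × ℝ => q.1.im) Yc q :=
    (Complex.imCLM.hasFDerivAt).comp q (ContinuousLinearMap.fst ℝ ℂ ℝ).hasFDerivAt
  have hU : HasFDerivAt (fun q : ℂ × ℝ => q.2) Uc q :=
    (ContinuousLinearMap.snd ℝ ℂ ℝ).hasFDerivAt
  have hS := (hX.mul hX).add (hY.mul hY)
  have hrf := (hS.mul hS).add (hU.mul hU)
  have hrf' : HasFDerivAt rho _ q := hrf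
  have hlog := hrf'.log (rho_pos q hq).ne' 
  have hΦ := Complex.ofRealCLM.hasFDerivAt.comp q hlog
  have hΦ' : HasFDerivAt (fun q : ℂ × ℝ => ((Real.log (rho q) : ℝ) : ℂ)) _ q := hΦ
  simp only [Zbar, Phi_eq]
  rw [hΦ'.fderiv]
  simp only [ContinuousLinearMap.comp_apply, ContinuousLinearMap.smul_apply,
    ContinuousLinearMap.add_apply, Pi.add_apply, Pi.mul_apply, Xc, Yc, Uc, ContinuousLinearMap.coe_comp', Function.comp_apply,
    ContinuousLinearMap.coe_fst', ContinuousLinearMap.coe_snd', Complex.reCLM_apply,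
    Complex.imCLM_apply, Complex.ofRealCLM_apply, smul_eq_mul]
  simp only [Complex.one_re, Complex.one_im, Complex.I_re, Complex.I_im, Complex.zero_re,
    Complex.zero_im, mul_zero, mul_one, zero_add, add_zero, mul_zero]
  obtain ⟨z, u⟩ := q
  have h1 : rho (z, u) ≠ 0 := (rho_pos _ hq).ne'
  have h3 : Gf (z, u) = ((z.re * z.re + z.im * z.im : ℝ) : ℂ) + Complex.I * u := by
    rw [Gf, Complex.mul_conj]
    push_cast [Complex.normSq_apply]
    ring
  have h2 : ((z.re * z.re + z.im * z.im : ℝ) : ℂ) + Complex.I * u ≠ 0 := by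
    rw [← h3]; exact Gf_ne _ hq
  rw [h3, ← div_eq_mul_inv, eq_div_iff h2]
  simp only [rho] at h1 ⊢
  push_cast
  set a := z.re with ha
  set b := z.im with hb
  have hz : z = (a : ℂ) + (b : ℂ) * Complex.I := (Complex.re_add_im z).symm
  have h1c : ((a:ℂ) * a + (b:ℂ) * b) * ((a:ℂ) * a + (b:ℂ) * b) + (u:ℂ) * u ≠ 0 := by
    intro h
    apply h1
    exact_mod_cast congrArg Complex.re h
  rw [hz]
  field_simp
  have hI3 : Complex.I ^ 3 = -Complex.I := by
    rw [pow_succ, Complex.I_sq]; ring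
  ring_nf
  simp only [hI3, Complex.I_sq]
  have hD : ((a:ℂ) ^ 2 * (b:ℂ) ^ 2 * 2 + (a:ℂ) ^ 4 + (b:ℂ) ^ 4 + (u:ℂ) ^ 2) ≠ 0 := by
    convert h1c using 1; ring
  linear_combination (4 * ((a:ℂ) + (b:ℂ) * Complex.I)) * (mul_inv_cancel₀ hD)

lemma Zop_congr {f g : ℂ × ℝ → ℂ} {p : ℂ × ℝ} (h : f =ᶠ[nhds p] g) : Zop f p = Zop g p := by
  unfold Zop
  rw [h.fderiv_eq]

lemma Zop_two_invGf (q : ℂ × ℝ) (hq : q ≠ 0) :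
    Zop (fun q => 2 * (Gf q)⁻¹) q = 0 := by
  have h := (hasFDerivAt_invGf q hq).const_mul (2 : ℂ)
  rw [Zop, h.fderiv]
  simp only [ContinuousLinearMap.coe_smul', Pi.smul_apply, Lg_apply, smul_eq_mul]
  simp only [map_one, mul_one, Complex.ofReal_zero, mul_zero, add_zero, map_ofNat,
    Complex.conj_I, Complex.ofReal_one, map_zero]
  ring_nf
  simp [Complex.I_sq]

lemma Zop_zH (q : ℂ × ℝ) (hq : q ≠ 0) :
    Zop (fun q => 2 * (q.1 * (Gf q)⁻¹)) q = 2 * (Gf q)⁻¹ := by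
  have h1 : HasFDerivAt (fun q : ℂ × ℝ => q.1) (ContinuousLinearMap.fst ℝ ℂ ℝ) q :=
    (ContinuousLinearMap.fst ℝ ℂ ℝ).hasFDerivAt
  have h : HasFDerivAt (fun q : ℂ × ℝ => 2 * (q.1 * (Gf q)⁻¹)) _ q :=
    (h1.mul (hasFDerivAt_invGf q hq)).const_mul (2 : ℂ)
  rw [Zop, h.fderiv]
  simp only [ContinuousLinearMap.coe_smul', Pi.smul_apply, Lg_apply, smul_eq_mul,
    ContinuousLinearMap.add_apply, ContinuousLinearMap.coe_fst']
  simp only [map_one, mul_one, Complex.ofReal_zero, mul_zero, add_zero, map_ofNat,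
    Complex.conj_I, Complex.ofReal_one, map_zero]
  have hG := Gf_ne q hq
  have hI3 : Complex.I ^ 3 = -Complex.I := by
    rw [pow_succ, Complex.I_sq]; ring
  field_simp
  ring_nf
  simp only [hI3, Complex.I_sq]
  try ring

/-- For (z,u) ≠ (0,0): Z(1/(|z|²+iu)) = 0, and consequently
Z(Z(Z̄(log(|z|⁴+u²)))) = 0. -/
theorem Z_annihilates_inverse (p : ℂ × ℝ) (hp : p ≠ 0) :
    Zop (fun q => 1 / (((‖q.1‖ : ℝ) : ℂ) ^ 2 + Complex.I * (q.2 : ℂ))) p = 0 ∧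
    Zop (Zop (Zbar (fun q =>
        ((Real.log (‖q.1‖ ^ 4 + q.2 ^ 2) : ℝ) : ℂ)))) p = 0 := by
  have hfun : (fun q : ℂ × ℝ => 1 / (((‖q.1‖ : ℝ) : ℂ) ^ 2 + Complex.I * (q.2 : ℂ)))
      = fun q => (Gf q)⁻¹ := by
    funext q
    rw [one_div, Gf]
    norm_cast
    rw [← Complex.normSq_eq_norm_sq, ← Complex.mul_conj]
  constructor
  · rw [hfun]
    exact Zop_invGf p hp
  · show Zop (Zop (Zbar Phi)) p = 0
    have hne : ∀ q : ℂ × ℝ, q ≠ 0 → (∀ᶠ r in nhds q, r ≠ (0 : ℂ × ℝ)) := fun q hq =>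
      eventually_ne_nhds hq
    have hstep1 : ∀ q : ℂ × ℝ, q ≠ 0 → Zop (Zbar Phi) q = 2 * (Gf q)⁻¹ := by
      intro q hq
      have he : Zbar Phi =ᶠ[nhds q] fun r => 2 * (r.1 * (Gf r)⁻¹) :=
        (hne q hq).mono fun r hr => by rw [ZbarPhi r hr]; ring
      rw [Zop_congr he, Zop_zH q hq]
    have hstep2 : Zop (Zbar Phi) =ᶠ[nhds p] fun q => 2 * (Gf q)⁻¹ :=
      (hne p hp).mono fun q hq => hstep1 q hq
    rw [Zop_congr hstep2]
    exact Zop_two_invGf p hp
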